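/- Define cos₃, sin₃₁, sin₃₂ : ℝ → ℝ by cos₃(x) = ∑_{m=0}^∞ (−1)^m x^{3m}/(3m)!, sin₃₁(x) = ∑_{m=0}^∞ (−1)^m x^{3m+1}/(3m+1)!, sin₃₂(x) = ∑_{m=0}^∞ (−1)^m x^{3m+2}/(3m+2)!. Then for every θ ∈ ℝ, cos₃(θ)³ − sin₃₁(θ)³ + sin₃₂(θ)³ + 3·cos₃(θ)·sin₃₁(θ)·sin₃₂(θ) = 1. (This is the k-thagorean theorem F(e^{iθ}) = 1 for the 3-complicated numbers 𝒞₃, generalizing cos² + sin² = 1.) -/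

import Mathlib

/-- `cos₃ x = ∑_{m≥0} (−1)^m x^{3m}/(3m)!`, the first 3-trigonometric component function of
`e^{iθ}` in the 3-complicated numbers `𝒞₃ = ℝ[i]/⟨i³ + 1⟩`. -/
noncomputable def cos₃ (x : ℝ) : ℝ :=
  ∑' m : ℕ, (-1 : ℝ) ^ m * x ^ (3 * m) / (Nat.factorial (3 * m) : ℝ)

/-- `sin₃₁ x = ∑_{m≥0} (−1)^m x^{3m+1}/(3m+1)!`. -/
noncomputable def sin₃₁ (x : ℝ) : ℝ :=
  ∑' m : ℕ, (-1 : ℝ) ^ m * x ^ (3 * m + 1) / (Nat.factorial (3 * m + 1) : ℝ)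

/-- `sin₃₂ x = ∑_{m≥0} (−1)^m x^{3m+2}/(3m+2)!`. -/
noncomputable def sin₃₂ (x : ℝ) : ℝ :=
  ∑' m : ℕ, (-1 : ℝ) ^ m * x ^ (3 * m + 2) / (Nat.factorial (3 * m + 2) : ℝ)

noncomputable def Sc (r : ℕ) (z : ℂ) : ℂ :=
  ∑' m : ℕ, z ^ (3 * m + r) / (Nat.factorial (3 * m + r) : ℂ)

lemma summable_exp_div (z : ℂ) : Summable (fun n : ℕ => z ^ n / (Nat.factorial n : ℂ)) := by
  apply Summable.of_norm
  refine (Real.summable_pow_div_factorial ‖z‖).congr fun n => ?_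
  rw [norm_div, norm_pow]
  norm_num [Complex.norm_natCast]

lemma summable_Sc (r : ℕ) (z : ℂ) :
    Summable (fun m : ℕ => z ^ (3 * m + r) / (Nat.factorial (3 * m + r) : ℂ)) := by
  exact (summable_exp_div z).comp_injective
    (i := fun m : ℕ => 3 * m + r) (fun a b hab => by dsimp only at hab; omega)

lemma exp_eq_Sc (z : ℂ) : Complex.exp z = Sc 0 z + Sc 1 z + Sc 2 z := by
  have hs := summable_exp_div z
  have h1 : Complex.exp z = ∑' n : ℕ, z ^ n / (Nat.factorial n : ℂ) := by
    rw [Complex.exp]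
    have : CauSeq.IsComplete ℂ norm := Complex.instIsComplete
    exact tendsto_nhds_unique z.exp'.tendsto_limit
      (NormedSpace.expSeries_div_summable z).hasSum.tendsto_sum_nat
  rw [h1, ← ((Nat.divModEquiv 3).symm.tsum_eq (fun n => z ^ n / (Nat.factorial n : ℂ)))]
  have hsum2' := (Nat.divModEquiv 3).symm.summable_iff.mpr hs
  have hsum2 : Summable (fun p : ℕ × Fin 3 =>
      z ^ ((Nat.divModEquiv 3).symm p) / (Nat.factorial ((Nat.divModEquiv 3).symm p) : ℂ)) :=
    hsum2'.congr fun p => rfl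
  rw [Summable.tsum_prod hsum2]
  have hrw : ∀ m : ℕ, (∑' r : Fin 3,
      z ^ ((Nat.divModEquiv 3).symm (m, r)) / (Nat.factorial ((Nat.divModEquiv 3).symm (m, r)) : ℂ))
      = z ^ (3 * m) / (Nat.factorial (3 * m) : ℂ)
        + z ^ (3 * m + 1) / (Nat.factorial (3 * m + 1) : ℂ)
        + z ^ (3 * m + 2) / (Nat.factorial (3 * m + 2) : ℂ) := by
    intro m
    rw [tsum_fintype, Fin.sum_univ_three]
    have : ∀ r : Fin 3, ((Nat.divModEquiv 3).symm (m, r) : ℕ) = 3 * m + (r : ℕ) := by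
      intro r; simp [Nat.divModEquiv, Nat.mul_comm]
    rw [this 0, this 1, this 2]
    norm_num
  rw [tsum_congr hrw]
  have h0 : Summable (fun m : ℕ => z ^ (3 * m) / (Nat.factorial (3 * m) : ℂ)) := by
    simpa using summable_Sc 0 z
  rw [Summable.tsum_add (h0.add (summable_Sc 1 z)) (summable_Sc 2 z),
      Summable.tsum_add h0 (summable_Sc 1 z)]
  simp [Sc]

lemma Sc_omega_mul (r : ℕ) (ω z : ℂ) (hω3 : ω ^ 3 = 1) :
    Sc r (ω * z) = ω ^ r * Sc r z := by
  unfold Sc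
  rw [← tsum_mul_left]
  refine tsum_congr fun m => ?_
  have : (ω * z) ^ (3 * m + r) = ω ^ r * z ^ (3 * m + r) := by
    rw [mul_pow, pow_add, pow_mul, hω3, one_pow, one_mul]
  rw [this, mul_div_assoc]


/-- **k-thagorean theorem for `𝒞₃`** (`F(e^{iθ}) = 1`, generalizing `cos² + sin² = 1`):
`cos₃³ − sin₃₁³ + sin₃₂³ + 3·cos₃·sin₃₁·sin₃₂ = 1`. -/
theorem kthagorean_C₃ (θ : ℝ) :
    cos₃ θ ^ 3 - sin₃₁ θ ^ 3 + sin₃₂ θ ^ 3 + 3 * cos₃ θ * sin₃₁ θ * sin₃₂ θ = 1 := by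
  set ω : ℂ := (-1 + Complex.I * Real.sqrt 3) / 2 with hωdef
  have h3 : (Real.sqrt 3 : ℂ) ^ 2 = 3 := by
    norm_cast
    rw [Real.sq_sqrt]; norm_num
  have hI : Complex.I ^ 2 = -1 := Complex.I_sq
  have hω : ω ^ 2 + ω + 1 = 0 := by
    rw [hωdef]
    linear_combination (((Real.sqrt 3 : ℂ)) ^ 2 / 4) * hI - (1 / 4 : ℂ) * h3
  have hω3 : ω ^ 3 = 1 := by linear_combination (ω - 1) * hω
  set z : ℂ := ((-θ : ℝ) : ℂ) with hzdef
  set a := Sc 0 z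
  set b := Sc 1 z
  set c := Sc 2 z
  have hE1 : Complex.exp z = a + b + c := by simpa using exp_eq_Sc z
  have hE2 : Complex.exp (ω * z) = a + ω * b + ω ^ 2 * c := by
    rw [exp_eq_Sc (ω * z), Sc_omega_mul 0 ω z hω3, Sc_omega_mul 1 ω z hω3,
      Sc_omega_mul 2 ω z hω3]
    ring
  have hE3 : Complex.exp (ω ^ 2 * z) = a + ω ^ 2 * b + ω * c := by
    rw [exp_eq_Sc (ω ^ 2 * z)]
    have h0 := Sc_omega_mul 0 (ω ^ 2) z (by rw [← pow_mul]; rw [show 2*3 = 3*2 from rfl, pow_mul, hω3]; norm_num)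
    have h1 := Sc_omega_mul 1 (ω ^ 2) z (by rw [← pow_mul]; rw [show 2*3 = 3*2 from rfl, pow_mul, hω3]; norm_num)
    have h2 := Sc_omega_mul 2 (ω ^ 2) z (by rw [← pow_mul]; rw [show 2*3 = 3*2 from rfl, pow_mul, hω3]; norm_num)
    rw [h0, h1, h2]
    have : (ω ^ 2) ^ 2 = ω := by linear_combination ω * hω3
    rw [this]
    ring
  have he : Complex.exp z * Complex.exp (ω * z) * Complex.exp (ω ^ 2 * z) = 1 := by
    rw [← Complex.exp_add, ← Complex.exp_add]
    have : z + ω * z + ω ^ 2 * z = 0 := by linear_combination z * hω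
    rw [this, Complex.exp_zero]
  have hprod : (a + b + c) * (a + ω * b + ω ^ 2 * c) * (a + ω ^ 2 * b + ω * c) = 1 := by
    rw [← hE1, ← hE2, ← hE3]; exact he
  have key : a ^ 3 + b ^ 3 + c ^ 3 - 3 * a * b * c = 1 := by
    linear_combination hprod - ((a + b + c) *
      (a * b + a * c + (ω - 1) * (b ^ 2 + c ^ 2) + (1 + ω ^ 2 - ω) * b * c)) * hω
  -- relate real functions to Sc at z = -θ
  have hsum0 : Summable fun m : ℕ => (-1 : ℝ) ^ m * θ ^ (3 * m) / (Nat.factorial (3 * m) : ℝ) := by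
    apply Summable.of_abs
    refine ((Real.summable_pow_div_factorial |θ|).comp_injective
      (i := fun m : ℕ => 3 * m) (fun x y h => by dsimp only at h; omega)).congr fun m => ?_
    simp [abs_div, _root_.abs_mul, _root_.abs_pow, Function.comp, Nat.abs_cast]
  have hsum1 : Summable fun m : ℕ => (-1 : ℝ) ^ m * θ ^ (3 * m + 1) / (Nat.factorial (3 * m + 1) : ℝ) := by
    apply Summable.of_abs
    refine ((Real.summable_pow_div_factorial |θ|).comp_injective
      (i := fun m : ℕ => 3 * m + 1) (fun x y h => by dsimp only at h; omega)).congr fun m => ?_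
    simp [abs_div, _root_.abs_mul, _root_.abs_pow, Function.comp, Nat.abs_cast]
  have hsum2 : Summable fun m : ℕ => (-1 : ℝ) ^ m * θ ^ (3 * m + 2) / (Nat.factorial (3 * m + 2) : ℝ) := by
    apply Summable.of_abs
    refine ((Real.summable_pow_div_factorial |θ|).comp_injective
      (i := fun m : ℕ => 3 * m + 2) (fun x y h => by dsimp only at h; omega)).congr fun m => ?_
    simp [abs_div, _root_.abs_mul, _root_.abs_pow, Function.comp, Nat.abs_cast]
  have hzp : ∀ n : ℕ, z ^ n = (-1 : ℂ) ^ n * (θ : ℂ) ^ n := by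
    intro n
    rw [hzdef]
    push_cast
    rw [show (-(θ : ℂ)) = (-1) * (θ : ℂ) by ring, mul_pow]
  have hneg3 : ∀ m : ℕ, (-1 : ℂ) ^ (3 * m) = (-1 : ℂ) ^ m := by
    intro m
    rw [pow_mul]
    norm_num
  have hc : ((cos₃ θ : ℝ) : ℂ) = a := by
    rw [cos₃, Complex.ofReal_tsum]
    show _ = Sc 0 z
    unfold Sc
    refine tsum_congr fun m => ?_
    push_cast
    rw [add_zero, hzp (3 * m), hneg3 m]
  have hs1 : ((sin₃₁ θ : ℝ) : ℂ) = -b := by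
    rw [sin₃₁, Complex.ofReal_tsum]
    have hb : -b = ∑' m : ℕ, -(z ^ (3 * m + 1) / (Nat.factorial (3 * m + 1) : ℂ)) := by
      rw [tsum_neg]; rfl
    rw [hb]
    refine tsum_congr fun m => ?_
    push_cast
    rw [hzp (3 * m + 1), pow_add (-1 : ℂ) (3 * m) 1, hneg3 m]
    ring
  have hs2 : ((sin₃₂ θ : ℝ) : ℂ) = c := by
    rw [sin₃₂, Complex.ofReal_tsum]
    show _ = Sc 2 z
    unfold Sc
    refine tsum_congr fun m => ?_
    push_cast
    rw [hzp (3 * m + 2), pow_add (-1 : ℂ) (3 * m) 2, hneg3 m]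
    ring
  have : ((cos₃ θ ^ 3 - sin₃₁ θ ^ 3 + sin₃₂ θ ^ 3 + 3 * cos₃ θ * sin₃₁ θ * sin₃₂ θ : ℝ) : ℂ) = 1 := by
    push_cast
    rw [hc, hs1, hs2]
    linear_combination key
  exact_mod_cast this
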